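/- β-β achievability bound: for every channel P_{Y|X}: A → B, every ε ∈ (0,1), every input distribution P_X on A, every τ ∈ (0,ε), every auxiliary distribution Q_Y on B, and every positive integer M with M/2 ≤ β_τ(P_Y, Q_Y) / β_{1−ε+τ}(P_{XY}, P_X × Q_Y), there exists an encoder f: {1,...,M} → A and decoder g: B → {1,...,M} ∪ {e} whose average probability of error is at most ε. -/

import Mathlib

open MeasureTheory

noncomputable def beta {W : Type*} [MeasurableSpace W] (α : ℝ) (P Q : MeasureTheory.Measure W) : ℝ :=
  sInf {b : ℝ | ∃ T : W → ℝ, Measurable T ∧ (∀ w, T w ∈ Set.Icc (0:ℝ) 1) ∧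
    α ≤ ∫ w, T w ∂P ∧ b = ∫ w, T w ∂Q}

/-- Average error probability of the code `(f, g)` over the channel `κ`
(`g y = none` represents the error symbol `e`). -/
noncomputable def avgError {A B : Type*} [MeasurableSpace A] [MeasurableSpace B]
    (κ : ProbabilityTheory.Kernel A B) (M : ℕ) (f : Fin M → A)
    (g : B → Option (Fin M)) : ℝ :=
  (1 / (M : ℝ)) * ∑ j : Fin M, (1 - (κ (f j) {y | g y = some j}).toReal)


instance {M : ℕ} : MeasurableSpace (Fin M) := ⊤
instance {M : ℕ} : MeasurableSpace (Option (Fin M)) := ⊤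

open ProbabilityTheory ENNReal Set

section Auxiliary

/-- A `[0,1]`-valued measurable function is integrable w.r.t. any probability measure. -/
lemma integrable01 {W : Type*} [MeasurableSpace W] {P : Measure W} [IsProbabilityMeasure P]
    {T : W → ℝ} (hT : Measurable T) (h01 : ∀ w, T w ∈ Set.Icc (0:ℝ) 1) :
    Integrable T P := by
  refine (integrable_const (1:ℝ)).mono' hT.aestronglyMeasurable ?_
  refine ae_of_all _ fun w => ?_
  rw [Real.norm_eq_abs, abs_le]
  constructor
  · linarith [(h01 w).1]
  · exact (h01 w).2

lemma beta_le {W : Type*} [MeasurableSpace W] {α : ℝ} {P Q : Measure W} {T : W → ℝ}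
    (hT : Measurable T) (h01 : ∀ w, T w ∈ Set.Icc (0:ℝ) 1) (hα : α ≤ ∫ w, T w ∂P) :
    beta α P Q ≤ ∫ w, T w ∂Q := by
  refine csInf_le ⟨0, fun b hb => ?_⟩ ⟨T, hT, h01, hα, rfl⟩
  obtain ⟨T', _, h01', _, rfl⟩ := hb
  exact integral_nonneg fun w => (h01' w).1

/-- If the integral of a (non-negative extended-real-valued) function w.r.t. a probability
measure is at most `C < ∞`, then there is a point where the function is at most `C`. -/
lemma exists_le_of_lintegral_le {Ω : Type*} [MeasurableSpace Ω] {μ : Measure Ω}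
    [IsProbabilityMeasure μ] {f : Ω → ℝ≥0∞} (hf : AEMeasurable f μ) {C : ℝ≥0∞} (hC : C ≠ ⊤)
    (h : ∫⁻ ω, f ω ∂μ ≤ C) : ∃ ω, f ω ≤ C := by
  by_contra hcon
  push_neg at hcon
  have h1 : ∫⁻ _ : Ω, C ∂μ < ∫⁻ ω, f ω ∂μ := by
    refine lintegral_strict_mono (IsProbabilityMeasure.ne_zero μ) hf ?_ (ae_of_all _ hcon)
    simp [lintegral_const, hC]
  rw [lintegral_const, measure_univ, mul_one] at h1
  exact absurd h (not_le.mpr h1)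

/-- Integrating a function of a single coordinate against a product of copies of a
probability measure. -/
lemma lintegral_pi_eval {ι : Type*} [Fintype ι] [DecidableEq ι] {α : Type*} [MeasurableSpace α]
    (μ : Measure α) [IsProbabilityMeasure μ] (i : ι) {F : α → ℝ≥0∞} (hF : Measurable F) :
    ∫⁻ c, F (c i) ∂(Measure.pi fun _ : ι => μ) = ∫⁻ x, F x ∂μ := by
  have hmap : (Measure.pi fun _ : ι => μ).map (Function.eval i) = μ := by
    ext s hs
    rw [Measure.map_apply (measurable_pi_apply i) hs]
    classical
    have hpre : Function.eval i ⁻¹' s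
        = Set.pi Set.univ (Function.update (fun _ : ι => (Set.univ : Set α)) i s) := by
      ext c
      simp only [Set.mem_preimage, Set.mem_univ_pi]
      constructor
      · intro h j
        by_cases hj : j = i
        · subst hj; simpa [Function.update_self] using h
        · simp [Function.update_of_ne hj]
      · intro h
        have := h i
        simpa [Function.update_self] using this
    rw [hpre, Measure.pi_pi]
    rw [Fintype.prod_eq_single i (fun j hj => by
      rw [Function.update_of_ne hj]; exact measure_univ)]
    rw [Function.update_self]
  calc ∫⁻ c, F (c i) ∂(Measure.pi fun _ : ι => μ)
      = ∫⁻ x, F x ∂((Measure.pi fun _ : ι => μ).map (Function.eval i)) :=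
        (lintegral_map hF (measurable_pi_apply i)).symm
    _ = ∫⁻ x, F x ∂μ := by rw [hmap]

/-- For a function bounded by `1`, the tail-measure integral over `Ioi 0` equals the one
over `Ioo 0 1`. -/
lemma tail_restrict {W : Type*} [MeasurableSpace W] (μ : Measure W) (f : W → ℝ)
    (h1 : ∀ w, f w ≤ 1) :
    ∫⁻ t in Set.Ioi (0:ℝ), μ {w | t < f w} = ∫⁻ t in Set.Ioo (0:ℝ) 1, μ {w | t < f w} := by
  rw [← Set.Ioo_union_Ici_eq_Ioi (zero_lt_one (α := ℝ))]
  rw [lintegral_union measurableSet_Ici (by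
    rw [Set.disjoint_left]
    intro t ht ht'
    exact absurd ht.2 (not_lt.mpr ht'))]
  have hzero : ∫⁻ t in Set.Ici (1:ℝ), μ {w | t < f w} = 0 := by
    have heq : ∀ᵐ t ∂(volume : Measure ℝ), t ∈ Set.Ici (1:ℝ) → μ {w | t < f w} = 0 := by
      refine ae_of_all _ fun t ht => ?_
      have : {w | t < f w} = ∅ := by
        ext w
        simp only [Set.mem_setOf_eq, Set.mem_empty_iff_false, iff_false, not_lt]
        exact le_trans (h1 w) ht
      rw [this, measure_empty]
    rw [setLIntegral_congr_fun_ae measurableSet_Ici heq]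
    simp
  rw [hzero, add_zero]

end Auxiliary

section Coding

variable {A B : Type*} [MeasurableSpace A] [MeasurableSpace B]

open scoped Classical in
/-- The sequential decoder: output the smallest message index whose codeword passes the
test `D` together with the received `y`. -/
noncomputable def dec (M : ℕ) (D : Set (A × B)) (c : Fin M → A) (y : B) : Option (Fin M) :=
  (Finset.univ.filter (fun j : Fin M => (c j, y) ∈ D)).min

open scoped Classical in
lemma dec_eq_some_iff {M : ℕ} {D : Set (A × B)} {c : Fin M → A} {y : B} {j : Fin M} :
    dec M D c y = some j ↔ ((c j, y) ∈ D ∧ ∀ i, i < j → (c i, y) ∉ D) := by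
  constructor
  · intro h
    have hj : j ∈ Finset.univ.filter (fun j : Fin M => (c j, y) ∈ D) :=
      Finset.mem_of_min h
    rw [Finset.mem_filter] at hj
    refine ⟨hj.2, fun i hi hmem => ?_⟩
    have hle : (Finset.univ.filter (fun j : Fin M => (c j, y) ∈ D)).min ≤ (i : WithTop (Fin M)) :=
      Finset.min_le (Finset.mem_filter.mpr ⟨Finset.mem_univ _, hmem⟩)
    rw [show (Finset.univ.filter (fun j : Fin M => (c j, y) ∈ D)).min = ((j : Fin M) : WithTop (Fin M)) from h] at hle
    exact absurd (WithTop.coe_le_coe.mp hle) (not_le.mpr hi)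
  · rintro ⟨h1, h2⟩
    show (Finset.univ.filter (fun j : Fin M => (c j, y) ∈ D)).min = (j : WithTop (Fin M))
    have hmem : j ∈ Finset.univ.filter (fun j : Fin M => (c j, y) ∈ D) :=
      Finset.mem_filter.mpr ⟨Finset.mem_univ _, h1⟩
    have h3 : (Finset.univ.filter (fun j : Fin M => (c j, y) ∈ D)).min ≤ (j : WithTop (Fin M)) :=
      Finset.min_le hmem
    have h4 : (j : WithTop (Fin M)) ≤ (Finset.univ.filter (fun j : Fin M => (c j, y) ∈ D)).min := by
      refine Finset.le_min fun b hb => ?_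
      rw [Finset.mem_filter] at hb
      by_contra hbj
      rw [WithTop.coe_le_coe] at hbj
      exact h2 b (not_le.mp hbj) hb.2
    exact le_antisymm h3 h4

open scoped Classical in
lemma dec_eq_none_iff {M : ℕ} {D : Set (A × B)} {c : Fin M → A} {y : B} :
    dec M D c y = none ↔ ∀ i : Fin M, (c i, y) ∉ D := by
  show (Finset.univ.filter (fun j : Fin M => (c j, y) ∈ D)).min = ⊤ ↔ _
  rw [Finset.min_eq_top, Finset.filter_eq_empty_iff]
  simp

lemma measurable_dec {M : ℕ} {D : Set (A × B)} (hD : MeasurableSet D) (c : Fin M → A) :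
    Measurable (dec M D c) := by
  apply measurable_to_countable'
  intro o
  cases o with
  | none =>
    have : dec M D c ⁻¹' {none} = ⋂ i : Fin M, {y | (c i, y) ∈ D}ᶜ := by
      ext y
      simp only [Set.mem_preimage, Set.mem_singleton_iff, Set.mem_iInter, Set.mem_compl_iff,
        Set.mem_setOf_eq]
      exact dec_eq_none_iff
    rw [this]
    exact MeasurableSet.iInter fun i => (hD.preimage measurable_prodMk_left).compl
  | some j =>
    have : dec M D c ⁻¹' {some j} =
        {y | (c j, y) ∈ D} ∩ ⋂ i : Fin M, ⋂ (_ : i < j), {y | (c i, y) ∈ D}ᶜ := by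
      ext y
      simp only [Set.mem_preimage, Set.mem_singleton_iff, Set.mem_inter_iff, Set.mem_iInter,
        Set.mem_compl_iff, Set.mem_setOf_eq]
      exact dec_eq_some_iff
    rw [this]
    exact (hD.preimage measurable_prodMk_left).inter
      (MeasurableSet.iInter fun i => MeasurableSet.iInter fun _ =>
        (hD.preimage measurable_prodMk_left).compl)

/-- Step A: random-coding argument.  If the "DT-style" bound on the error quantity is at most
`M · ε`, then a code with average error probability at most `ε` exists. -/
lemma stepA (κ : ProbabilityTheory.Kernel A B) [ProbabilityTheory.IsMarkovKernel κ]
    (PX : Measure A) [IsProbabilityMeasure PX]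
    (M : ℕ) (hM : 0 < M) {D : Set (A × B)} (hD : MeasurableSet D)
    {ε : ℝ} (hε0 : 0 ≤ ε)
    (hbound : (M : ℝ≥0∞) * ((PX.compProd κ) Dᶜ)
        + ∫⁻ y, min (M : ℝ≥0∞) ((∑ j : Fin M, ((j : ℕ) : ℝ≥0∞)) * PX {x | (x, y) ∈ D})
            ∂(PX.bind κ)
      ≤ (M : ℝ≥0∞) * ENNReal.ofReal ε) :
    ∃ f : Fin M → A, ∃ g : B → Option (Fin M), Measurable g ∧ avgError κ M f g ≤ ε := by
  classical
  set PY := PX.bind κ with hPYdef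
  set PXY := PX.compProd κ with hPXYdef
  set ν : Measure (Fin M → A) := Measure.pi fun _ : Fin M => PX with hν
  -- the indicator of the section of `D`
  set ind : A → B → ℝ≥0∞ := fun x y => if (x, y) ∈ D then 1 else 0 with hind
  set χ : Fin M → (Fin M → A) → B → ℝ≥0∞ :=
    fun j c y => min 1 (∑ i ∈ Finset.Iio j, ind (c i) y) with hχ
  set Ψ : (Fin M → A) → ℝ≥0∞ :=
    fun c => ∑ j : Fin M, (κ (c j) {y | (c j, y) ∈ D}ᶜ + ∫⁻ y, χ j c y ∂(κ (c j))) with hΨ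
  set V : B → ℝ≥0∞ := fun y => PX {x | (x, y) ∈ D} with hV
  have hVmeas : Measurable V := by
    have : V = fun y => PX ((fun x => (x, y)) ⁻¹' D) := rfl
    rw [this]
    exact measurable_measure_prodMk_right hD
  have hind_meas : Measurable (fun p : A × B => ind p.1 p.2) := by
    have : (fun p : A × B => ind p.1 p.2) = D.indicator (fun _ => 1) := by
      funext p
      simp [hind, Set.indicator_apply]
    rw [this]
    exact measurable_const.indicator hD
  have hχ_meas : ∀ j : Fin M, Measurable (fun q : (Fin M → A) × B => χ j q.1 q.2) := by
    intro j
    apply Measurable.min measurable_const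
    apply Finset.measurable_sum
    intro i _
    have hpair : Measurable fun q : (Fin M → A) × B => (q.1 i, q.2) :=
      Measurable.prodMk (by exact (measurable_pi_apply i).comp measurable_fst) measurable_snd
    exact hind_meas.comp hpair
  have hterm1_meas : ∀ j : Fin M,
      Measurable (fun c : Fin M → A => κ (c j) {y | (c j, y) ∈ D}ᶜ) := by
    intro j
    have heq : (fun c : Fin M → A => κ (c j) {y | (c j, y) ∈ D}ᶜ)
        = (fun x => κ x (Prod.mk x ⁻¹' Dᶜ)) ∘ (fun c => c j) := by
      funext c
      rfl
    rw [heq]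
    exact (Kernel.measurable_kernel_prodMk_left hD.compl).comp (measurable_pi_apply j)
  have hterm2_meas : ∀ j : Fin M,
      Measurable (fun c : Fin M → A => ∫⁻ y, χ j c y ∂(κ (c j))) := by
    intro j
    have := Measurable.lintegral_kernel_prod_right
      (κ := κ.comap (fun c : Fin M → A => c j) (measurable_pi_apply j))
      (f := fun c y => χ j c y) (by exact hχ_meas j)
    simpa only [Kernel.comap_apply] using this
  -- expectation of the first error terms
  have hTerm1 : ∀ j : Fin M, ∫⁻ c, κ (c j) {y | (c j, y) ∈ D}ᶜ ∂ν = PXY Dᶜ := by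
    intro j
    have heq : (fun c : Fin M → A => κ (c j) {y | (c j, y) ∈ D}ᶜ)
        = fun c => (fun x => κ x (Prod.mk x ⁻¹' Dᶜ)) (c j) := rfl
    rw [heq, lintegral_pi_eval PX j (Kernel.measurable_kernel_prodMk_left hD.compl)]
    rw [hPXYdef, Measure.compProd_apply hD.compl]
  -- expectation of the cross terms
  have hTerm2 : ∀ j : Fin M,
      ∫⁻ c, (∫⁻ y, χ j c y ∂(κ (c j))) ∂ν
        ≤ ∫⁻ y, min 1 (((Finset.Iio j).card : ℝ≥0∞) * V y) ∂PY := by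
    intro j
    set p : Fin M → Prop := fun i => i < j with hp
    have hpj : ¬ p j := lt_irrefl j
    set e := MeasurableEquiv.piEquivPiSubtypeProd (fun _ : Fin M => A) p with he
    have hmp := measurePreserving_piEquivPiSubtypeProd (fun _ : Fin M => PX) p
    set ν₁ : Measure (∀ _ : Subtype p, A) := Measure.pi fun _ => PX with hν₁
    set ν₂ : Measure (∀ _ : {i // ¬ p i}, A) := Measure.pi fun _ => PX with hν₂
    set H : (∀ _ : Subtype p, A) × (∀ _ : {i // ¬ p i}, A) → ℝ≥0∞ :=
      fun q => ∫⁻ y, min 1 (∑ i ∈ (Finset.Iio j).attach,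
        ind (q.1 ⟨i.1, Finset.mem_Iio.mp i.2⟩) y) ∂(κ (q.2 ⟨j, hpj⟩)) with hH
    have hHmeas : Measurable H := by
      have hsum : Measurable (fun z : ((∀ _ : Subtype p, A) × (∀ _ : {i // ¬ p i}, A)) × B =>
          min 1 (∑ i ∈ (Finset.Iio j).attach,
            ind (z.1.1 ⟨i.1, Finset.mem_Iio.mp i.2⟩) z.2)) := by
        apply Measurable.min measurable_const
        apply Finset.measurable_sum
        intro i _
        have hpair : Measurable fun z : ((∀ _ : Subtype p, A) × (∀ _ : {i // ¬ p i}, A)) × B =>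
            (z.1.1 ⟨i.1, Finset.mem_Iio.mp i.2⟩, z.2) :=
          Measurable.prodMk
            (by exact (measurable_pi_apply _).comp (measurable_fst.comp measurable_fst))
            measurable_snd
        exact hind_meas.comp hpair
      have := Measurable.lintegral_kernel_prod_right
        (κ := κ.comap
          (fun q : (∀ _ : Subtype p, A) × (∀ _ : {i // ¬ p i}, A) => q.2 ⟨j, hpj⟩)
          (by exact (measurable_pi_apply _).comp measurable_snd))
        (f := fun q y => min 1 (∑ i ∈ (Finset.Iio j).attach,
          ind (q.1 ⟨i.1, Finset.mem_Iio.mp i.2⟩) y)) (by exact hsum)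
      simpa only [Kernel.comap_apply] using this
    have hcomp : ∀ c : Fin M → A, ∫⁻ y, χ j c y ∂(κ (c j)) = H (e c) := by
      intro c
      have he2 : (e c).2 ⟨j, hpj⟩ = c j := rfl
      rw [hH]
      simp only [he2]
      congr 1
      funext y
      rw [hχ]
      simp only
      congr 1
      rw [← Finset.sum_attach (Finset.Iio j) (fun i => ind (c i) y)]
      rfl
    have hmain : ∫⁻ c, (∫⁻ y, χ j c y ∂(κ (c j))) ∂ν = ∫⁻ w, ∫⁻ v, H (v, w) ∂ν₁ ∂ν₂ := by
      calc ∫⁻ c, (∫⁻ y, χ j c y ∂(κ (c j))) ∂ν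
          = ∫⁻ c, H (e c) ∂ν := lintegral_congr hcomp
        _ = ∫⁻ q, H q ∂(ν₁.prod ν₂) := hmp.lintegral_comp hHmeas
        _ = ∫⁻ w, ∫⁻ v, H (v, w) ∂ν₁ ∂ν₂ := lintegral_prod_symm H hHmeas.aemeasurable
    rw [hmain]
    -- fixed second block w; bound the inner integral
    have hinner : ∀ w, ∫⁻ v, H (v, w) ∂ν₁
        ≤ ∫⁻ y, min 1 (((Finset.Iio j).card : ℝ≥0∞) * V y) ∂(κ (w ⟨j, hpj⟩)) := by
      intro w
      have hswap2 : ∫⁻ v, H (v, w) ∂ν₁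
          = ∫⁻ y, ∫⁻ v, min 1 (∑ i ∈ (Finset.Iio j).attach,
              ind (v ⟨i.1, Finset.mem_Iio.mp i.2⟩) y) ∂ν₁ ∂(κ (w ⟨j, hpj⟩)) := by
        have hmble : Measurable (Function.uncurry fun (v : ∀ _ : Subtype p, A) (y : B) =>
            min 1 (∑ i ∈ (Finset.Iio j).attach, ind (v ⟨i.1, Finset.mem_Iio.mp i.2⟩) y)) := by
          apply Measurable.min measurable_const
          apply Finset.measurable_sum
          intro i _
          have hpair : Measurable fun z : (∀ _ : Subtype p, A) × B =>
              (z.1 ⟨i.1, Finset.mem_Iio.mp i.2⟩, z.2) :=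
            Measurable.prodMk (by exact (measurable_pi_apply _).comp measurable_fst)
              measurable_snd
          exact hind_meas.comp hpair
        exact lintegral_lintegral_swap (μ := ν₁) (ν := κ (w ⟨j, hpj⟩))
          (f := fun v y => min 1 (∑ i ∈ (Finset.Iio j).attach,
            ind (v ⟨i.1, Finset.mem_Iio.mp i.2⟩) y)) hmble.aemeasurable
      rw [hswap2]
      refine lintegral_mono fun y => ?_
      -- pointwise in y : expectation of min ≤ min of expectations
      have hle1 : ∫⁻ v, min 1 (∑ i ∈ (Finset.Iio j).attach,
          ind (v ⟨i.1, Finset.mem_Iio.mp i.2⟩) y) ∂ν₁ ≤ 1 := by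
        calc ∫⁻ v, min 1 (∑ i ∈ (Finset.Iio j).attach,
              ind (v ⟨i.1, Finset.mem_Iio.mp i.2⟩) y) ∂ν₁
            ≤ ∫⁻ _, 1 ∂ν₁ := lintegral_mono fun v => min_le_left _ _
          _ = 1 := by simp
      have hle2 : ∫⁻ v, min 1 (∑ i ∈ (Finset.Iio j).attach,
          ind (v ⟨i.1, Finset.mem_Iio.mp i.2⟩) y) ∂ν₁
          ≤ ((Finset.Iio j).card : ℝ≥0∞) * V y := by
        calc ∫⁻ v, min 1 (∑ i ∈ (Finset.Iio j).attach,
              ind (v ⟨i.1, Finset.mem_Iio.mp i.2⟩) y) ∂ν₁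
            ≤ ∫⁻ v, ∑ i ∈ (Finset.Iio j).attach,
              ind (v ⟨i.1, Finset.mem_Iio.mp i.2⟩) y ∂ν₁ :=
              lintegral_mono fun v => min_le_right _ _
          _ = ∑ i ∈ (Finset.Iio j).attach,
              ∫⁻ v, ind (v ⟨i.1, Finset.mem_Iio.mp i.2⟩) y ∂ν₁ := by
              refine lintegral_finset_sum _ fun i _ => ?_
              exact (hind_meas.comp (measurable_id.prodMk measurable_const)).comp
                (measurable_pi_apply _)
          _ = ∑ i ∈ (Finset.Iio j).attach, V y := by
              refine Finset.sum_congr rfl fun i _ => ?_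
              have hFmeas : Measurable (fun x : A => ind x y) :=
                hind_meas.comp (measurable_id.prodMk measurable_const)
              rw [hν₁, lintegral_pi_eval PX _ hFmeas]
              have : (fun x : A => ind x y) = Set.indicator {x : A | (x, y) ∈ D} (fun _ => 1) := by
                funext x
                simp [hind, Set.indicator_apply]
              rw [this]
              exact lintegral_indicator_one (hD.preimage measurable_prodMk_right)
          _ = ((Finset.Iio j).card : ℝ≥0∞) * V y := by
              rw [Finset.sum_const, Finset.card_attach, nsmul_eq_mul]
      exact le_min hle1 hle2
    calc ∫⁻ w, ∫⁻ v, H (v, w) ∂ν₁ ∂ν₂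
        ≤ ∫⁻ w, ∫⁻ y, min 1 (((Finset.Iio j).card : ℝ≥0∞) * V y) ∂(κ (w ⟨j, hpj⟩)) ∂ν₂ :=
          lintegral_mono hinner
      _ = ∫⁻ x, ∫⁻ y, min 1 (((Finset.Iio j).card : ℝ≥0∞) * V y) ∂(κ x) ∂PX := by
          have hFm : Measurable fun x : A =>
              ∫⁻ y, min 1 (((Finset.Iio j).card : ℝ≥0∞) * V y) ∂(κ x) := by
            refine Measurable.lintegral_kernel_prod_right (κ := κ)
              (f := fun _ y => min 1 (((Finset.Iio j).card : ℝ≥0∞) * V y)) ?_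
            exact (measurable_const.min (hVmeas.const_mul _)).comp measurable_snd
          exact lintegral_pi_eval (ι := {i // ¬ p i}) PX ⟨j, hpj⟩
            (F := fun x : A => ∫⁻ y, min 1 (((Finset.Iio j).card : ℝ≥0∞) * V y) ∂(κ x)) hFm
      _ = ∫⁻ y, min 1 (((Finset.Iio j).card : ℝ≥0∞) * V y) ∂PY := by
          rw [hPYdef]
          exact (Measure.lintegral_bind κ.measurable.aemeasurable
            (measurable_const.min (hVmeas.const_mul _)).aemeasurable).symm
  -- expectation of Ψ
  have hΨmeas : Measurable Ψ := by
    apply Finset.measurable_sum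
    intro j _
    exact (hterm1_meas j).add (hterm2_meas j)
  have hΨint : ∫⁻ c, Ψ c ∂ν ≤ (M : ℝ≥0∞) * PXY Dᶜ
      + ∫⁻ y, min (M : ℝ≥0∞) ((∑ j : Fin M, ((j : ℕ) : ℝ≥0∞)) * V y) ∂PY := by
    rw [hΨ]
    rw [lintegral_finset_sum (f := fun j c => κ (c j) {y | (c j, y) ∈ D}ᶜ + ∫⁻ y, χ j c y ∂(κ (c j))) _
      (fun j _ => (hterm1_meas j).add (hterm2_meas j))]
    have hsplit : ∀ j : Fin M,
        ∫⁻ c, (κ (c j) {y | (c j, y) ∈ D}ᶜ + ∫⁻ y, χ j c y ∂(κ (c j))) ∂ν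
          ≤ PXY Dᶜ + ∫⁻ y, min 1 (((Finset.Iio j).card : ℝ≥0∞) * V y) ∂PY := by
      intro j
      rw [lintegral_add_left (hterm1_meas j), hTerm1 j]
      exact add_le_add_right (hTerm2 j) _
    calc ∑ j : Fin M, ∫⁻ c, (κ (c j) {y | (c j, y) ∈ D}ᶜ + ∫⁻ y, χ j c y ∂(κ (c j))) ∂ν
        ≤ ∑ j : Fin M, (PXY Dᶜ + ∫⁻ y, min 1 (((Finset.Iio j).card : ℝ≥0∞) * V y) ∂PY) :=
          Finset.sum_le_sum fun j _ => hsplit j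
      _ = (M : ℝ≥0∞) * PXY Dᶜ
          + ∑ j : Fin M, ∫⁻ y, min 1 (((Finset.Iio j).card : ℝ≥0∞) * V y) ∂PY := by
          rw [Finset.sum_add_distrib, Finset.sum_const, Finset.card_univ, Fintype.card_fin,
            nsmul_eq_mul]
      _ ≤ (M : ℝ≥0∞) * PXY Dᶜ
          + ∫⁻ y, min (M : ℝ≥0∞) ((∑ j : Fin M, ((j : ℕ) : ℝ≥0∞)) * V y) ∂PY := by
          refine add_le_add_right ?_ _
          rw [← lintegral_finset_sum _ (fun j _ =>
            measurable_const.min (hVmeas.const_mul _))]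
          refine lintegral_mono fun y => ?_
          refine le_min ?_ ?_
          · calc ∑ j : Fin M, min 1 (((Finset.Iio j).card : ℝ≥0∞) * V y)
                ≤ ∑ _j : Fin M, (1 : ℝ≥0∞) := Finset.sum_le_sum fun j _ => min_le_left _ _
              _ = (M : ℝ≥0∞) := by simp
          · calc ∑ j : Fin M, min 1 (((Finset.Iio j).card : ℝ≥0∞) * V y)
                ≤ ∑ j : Fin M, ((Finset.Iio j).card : ℝ≥0∞) * V y :=
                  Finset.sum_le_sum fun j _ => min_le_right _ _
              _ = (∑ j : Fin M, ((j : ℕ) : ℝ≥0∞)) * V y := by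
                  rw [Finset.sum_mul]
                  refine Finset.sum_congr rfl fun j _ => ?_
                  congr 2
                  exact Fin.card_Iio j
  have hCne : (M : ℝ≥0∞) * ENNReal.ofReal ε ≠ ⊤ :=
    ENNReal.mul_ne_top (ENNReal.natCast_ne_top M) ENNReal.ofReal_ne_top
  obtain ⟨c, hc⟩ := exists_le_of_lintegral_le hΨmeas.aemeasurable hCne
    (le_trans hΨint hbound)
  -- produce the code
  refine ⟨c, dec M D c, measurable_dec hD c, ?_⟩
  -- error sets
  set E : Fin M → Set B :=
    fun j => {y | (c j, y) ∈ D} ∩ ⋂ i : Fin M, ⋂ (_ : i < j), {y | (c i, y) ∈ D}ᶜ with hE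
  have hEmeas : ∀ j, MeasurableSet (E j) := fun j =>
    (hD.preimage measurable_prodMk_left).inter
      (MeasurableSet.iInter fun i => MeasurableSet.iInter fun _ =>
        (hD.preimage measurable_prodMk_left).compl)
  have hEsub : ∀ j, E j ⊆ {y | dec M D c y = some j} := by
    intro j y hy
    rw [Set.mem_setOf_eq, dec_eq_some_iff]
    refine ⟨hy.1, fun i hi => ?_⟩
    have := hy.2
    rw [Set.mem_iInter] at this
    have := this i
    rw [Set.mem_iInter] at this
    exact this hi
  -- bound each error term
  have hterm : ∀ j : Fin M, 1 - (κ (c j) {y | dec M D c y = some j}).toReal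
      ≤ (κ (c j) (E j)ᶜ).toReal := by
    intro j
    have h1 : (κ (c j) (E j)).toReal ≤ (κ (c j) {y | dec M D c y = some j}).toReal :=
      ENNReal.toReal_mono (measure_ne_top _ _) (measure_mono (hEsub j))
    have h2 : (κ (c j) (E j)ᶜ).toReal = 1 - (κ (c j) (E j)).toReal := by
      rw [measure_compl (hEmeas j) (measure_ne_top _ _), measure_univ,
        ENNReal.toReal_sub_of_le prob_le_one ENNReal.one_ne_top, ENNReal.toReal_one]
    rw [h2]
    linarith
  have hterm2 : ∀ j : Fin M, κ (c j) (E j)ᶜ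
      ≤ κ (c j) {y | (c j, y) ∈ D}ᶜ + ∫⁻ y, χ j c y ∂(κ (c j)) := by
    intro j
    have hcompl : (E j)ᶜ = {y | (c j, y) ∈ D}ᶜ ∪ ⋃ i : Fin M, ⋃ (_ : i < j), {y | (c i, y) ∈ D} := by
      rw [hE]
      simp [Set.compl_inter, Set.compl_iInter]
    rw [hcompl]
    refine le_trans (measure_union_le _ _) (add_le_add_right ?_ _)
    have hU : MeasurableSet (⋃ i : Fin M, ⋃ (_ : i < j), {y | (c i, y) ∈ D}) :=
      MeasurableSet.iUnion fun i => MeasurableSet.iUnion fun _ =>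
        hD.preimage measurable_prodMk_left
    rw [← lintegral_indicator_one hU]
    refine lintegral_mono fun y => ?_
    by_cases hy : y ∈ ⋃ i : Fin M, ⋃ (_ : i < j), {y | (c i, y) ∈ D}
    · rw [Set.indicator_of_mem hy]
      rw [Set.mem_iUnion] at hy
      obtain ⟨i, hi⟩ := hy
      rw [Set.mem_iUnion] at hi
      obtain ⟨hij, hyi⟩ := hi
      refine le_min le_rfl ?_
      calc (1 : ℝ≥0∞) = ind (c i) y := by
            have h' : (c i, y) ∈ D := hyi
            simp only [hind]
            rw [if_pos h']
        _ ≤ ∑ i' ∈ Finset.Iio j, ind (c i') y :=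
          Finset.single_le_sum (f := fun i' => ind (c i') y)
            (fun _ _ => zero_le) (Finset.mem_Iio.mpr hij)
    · rw [Set.indicator_of_notMem hy]
      exact zero_le
  -- put everything together
  have hM' : (0 : ℝ) < M := Nat.cast_pos.mpr hM
  have hΨc_ne : Ψ c ≠ ⊤ := ne_top_of_le_ne_top hCne hc
  have hsum_le : ∑ j : Fin M, (κ (c j) (E j)ᶜ) ≤ Ψ c := by
    rw [hΨ]
    exact Finset.sum_le_sum fun j _ => hterm2 j
  calc avgError κ M c (dec M D c)
      = (1 / (M : ℝ)) * ∑ j : Fin M, (1 - (κ (c j) {y | dec M D c y = some j}).toReal) := rfl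
    _ ≤ (1 / (M : ℝ)) * ∑ j : Fin M, (κ (c j) (E j)ᶜ).toReal := by
        refine mul_le_mul_of_nonneg_left ?_ (by positivity)
        exact Finset.sum_le_sum fun j _ => hterm j
    _ = (1 / (M : ℝ)) * (∑ j : Fin M, κ (c j) (E j)ᶜ).toReal := by
        rw [ENNReal.toReal_sum fun j _ => measure_ne_top _ _]
    _ ≤ (1 / (M : ℝ)) * (Ψ c).toReal := by
        refine mul_le_mul_of_nonneg_left ?_ (by positivity)
        exact ENNReal.toReal_mono hΨc_ne hsum_le
    _ ≤ (1 / (M : ℝ)) * ((M : ℝ≥0∞) * ENNReal.ofReal ε).toReal := by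
        refine mul_le_mul_of_nonneg_left ?_ (by positivity)
        exact ENNReal.toReal_mono hCne hc
    _ = ε := by
        rw [ENNReal.toReal_mul, ENNReal.toReal_natCast, ENNReal.toReal_ofReal hε0]
        field_simp

end Coding

/-- The β-β achievability bound. -/
theorem betabeta_achievability {A B : Type*} [MeasurableSpace A] [MeasurableSpace B]
    (κ : ProbabilityTheory.Kernel A B) [ProbabilityTheory.IsMarkovKernel κ]
    (ε τ : ℝ) (hε : ε ∈ Set.Ioo (0 : ℝ) 1) (hτ : τ ∈ Set.Ioo (0 : ℝ) ε)
    (PX : Measure A) [IsProbabilityMeasure PX]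
    (QY : Measure B) [IsProbabilityMeasure QY]
    (M : ℕ) (hM : 0 < M)
    (hMle : (M : ℝ) / 2 ≤ beta τ (PX.bind κ) QY / beta (1 - ε + τ) (PX.compProd κ) (PX.prod QY)) :
    ∃ f : Fin M → A, ∃ g : B → Option (Fin M), Measurable g ∧ avgError κ M f g ≤ ε := by
  obtain ⟨hε0, hε1⟩ := hε
  obtain ⟨hτ0, hτε⟩ := hτ
  haveI hPYprob : IsProbabilityMeasure (PX.bind κ) := by
    constructor
    rw [Measure.bind_apply MeasurableSet.univ κ.measurable.aemeasurable]
    simp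
  rcases Nat.lt_or_ge M 2 with hM2 | hM2
  · -- trivial case M = 1
    have hM1 : M = 1 := by omega
    subst hM1
    have hA : Nonempty A := by
      by_contra h
      rw [not_nonempty_iff] at h
      have h0 : PX Set.univ = 1 := measure_univ
      rw [Set.univ_eq_empty_iff.mpr h, measure_empty] at h0
      exact zero_ne_one h0
    obtain ⟨a⟩ := hA
    refine ⟨fun _ => a, fun _ => some 0, measurable_const, ?_⟩
    have hset : ∀ j : Fin 1, {y : B | (some (0 : Fin 1) : Option (Fin 1)) = some j} = Set.univ := by
      intro j
      ext y
      simp [Subsingleton.elim j 0]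
    simp only [avgError, hset]
    simp [measure_univ]
    linarith
  · -- main case M ≥ 2
    set PY := PX.bind κ with hPYdef
    set PXY := PX.compProd κ with hPXYdef
    set β1 := beta τ PY QY with hβ1def
    set β2 := beta (1 - ε + τ) PXY (PX.prod QY) with hβ2def
    have hβ2nonneg : 0 ≤ β2 := by
      rw [hβ2def, _root_.beta]
      refine Real.sInf_nonneg fun b hb => ?_
      obtain ⟨T', _, h01', _, rfl⟩ := hb
      exact integral_nonneg fun w => (h01' w).1
    have hβ2pos : 0 < β2 := by
      rcases lt_or_eq_of_le hβ2nonneg with h | h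
      · exact h
      · exfalso
        rw [← h, _root_.div_zero] at hMle
        have : (0:ℝ) < (M:ℝ)/2 := by positivity
        linarith
    have hβ1ge : (M : ℝ)/2 * β2 ≤ β1 := (le_div_iff₀ hβ2pos).mp hMle
    have hβ1pos : 0 < β1 := lt_of_lt_of_le (by positivity) hβ1ge
    have hM1R : (1:ℝ) ≤ (M:ℝ) := by exact_mod_cast Nat.one_le_of_lt hM2
    have hM2R : (2:ℝ) ≤ (M:ℝ) := by exact_mod_cast hM2
    have hMsub : (0:ℝ) < (M:ℝ) - 1 := by linarith
    -- choose a near-optimal test T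
    have hβ2lt : β2 < 2 * β1 / ((M:ℝ) - 1) := by
      have h2 : β2 ≤ 2 * β1 / (M:ℝ) := by
        rw [le_div_iff₀ (by positivity : (0:ℝ) < (M:ℝ))]
        nlinarith
      have h3 : 2 * β1 / (M:ℝ) < 2 * β1 / ((M:ℝ) - 1) := by
        apply div_lt_div_of_pos_left (by linarith : (0:ℝ) < 2 * β1) hMsub
          (by linarith : (M:ℝ) - 1 < (M:ℝ))
      linarith
    have hSne : {b : ℝ | ∃ T : A × B → ℝ, Measurable T ∧ (∀ w, T w ∈ Set.Icc (0:ℝ) 1) ∧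
        (1 - ε + τ) ≤ ∫ w, T w ∂PXY ∧ b = ∫ w, T w ∂(PX.prod QY)}.Nonempty := by
      refine ⟨∫ w, (fun _ : A × B => 1 - ε + τ) w ∂(PX.prod QY),
        fun _ => 1 - ε + τ, measurable_const,
        fun w => ⟨by show (0:ℝ) ≤ 1 - ε + τ; linarith, by show (1:ℝ) - ε + τ ≤ 1; linarith⟩,
        ?_, rfl⟩
      rw [integral_const]
      simp
    obtain ⟨b, hbmem, hbT⟩ := exists_lt_of_csInf_lt hSne (show sInf _ < 2 * β1 / ((M:ℝ) - 1) from hβ2lt)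
    obtain ⟨T, hTmeas, hT01, hTP, rfl⟩ := hbmem
    set b := ∫ w, T w ∂(PX.prod QY) with hbdef
    have hb0 : 0 ≤ b := integral_nonneg fun w => (hT01 w).1
    -- the scaling ("change of measure") lemma
    have hscale : ∀ U : B → ℝ, Measurable U → (∀ y, U y ∈ Set.Icc (0:ℝ) 1) →
        ∫ y, U y ∂PY ≤ max τ (τ / β1 * ∫ y, U y ∂QY) := by
      intro U hU h01
      set pp := ∫ y, U y ∂PY with hpp
      set qq := ∫ y, U y ∂QY with hqq
      by_cases hple : pp ≤ τ
      · exact le_trans hple (le_max_left _ _)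
      push_neg at hple
      have hppos : 0 < pp := lt_trans hτ0 hple
      have hq0 : 0 ≤ qq := integral_nonneg fun y => (h01 y).1
      have hc1 : τ / pp ≤ 1 := by
        rw [div_le_one hppos]
        linarith
      have hc0 : 0 ≤ τ / pp := by positivity
      have hbetale : β1 ≤ ∫ y, (τ / pp) * U y ∂QY := by
        refine beta_le (hU.const_mul _) (fun y => ⟨mul_nonneg hc0 (h01 y).1, ?_⟩) ?_
        · calc τ / pp * U y ≤ 1 * 1 :=
              mul_le_mul hc1 (h01 y).2 (h01 y).1 zero_le_one
            _ = 1 := by ring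
        · rw [integral_const_mul, ← hpp, div_mul_cancel₀ _ (ne_of_gt hppos)]
      rw [integral_const_mul, ← hqq] at hbetale
      refine le_trans ?_ (le_max_right _ _)
      rw [div_mul_eq_mul_div, le_div_iff₀ hβ1pos]
      have h2 : β1 * pp ≤ (τ / pp * qq) * pp := mul_le_mul_of_nonneg_right hbetale (le_of_lt hppos)
      have h3 : (τ / pp * qq) * pp = τ * qq := by field_simp
      nlinarith
    -- Step B : choose the threshold t
    set sE : ℝ≥0∞ := ∑ j : Fin M, ((j : ℕ) : ℝ≥0∞) with hsE
    have hsE_val : sE.toReal = (M:ℝ) * ((M:ℝ) - 1) / 2 := by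
      have hnat : (∑ j : Fin M, (j : ℕ)) * 2 = M * (M - 1) := by
        rw [Fin.sum_univ_eq_sum_range (fun i => i)]
        exact Finset.sum_range_id_mul_two M
      have hMM : ((M * (M - 1) : ℕ) : ℝ) = (M:ℝ) * ((M:ℝ) - 1) := by
        rw [Nat.cast_mul, Nat.cast_sub (Nat.one_le_of_lt hM2), Nat.cast_one]
      have hcast : ((∑ j : Fin M, (j : ℕ) : ℕ) : ℝ) * 2 = (M:ℝ) * ((M:ℝ) - 1) := by
        calc ((∑ j : Fin M, (j : ℕ) : ℕ) : ℝ) * 2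
            = (((∑ j : Fin M, (j : ℕ)) * 2 : ℕ) : ℝ) := by push_cast; ring
          _ = ((M * (M - 1) : ℕ) : ℝ) := by exact_mod_cast congrArg (fun n : ℕ => (n : ℝ)) hnat
          _ = (M:ℝ) * ((M:ℝ) - 1) := hMM
      have hsE_cast : sE = ((∑ j : Fin M, (j : ℕ) : ℕ) : ℝ≥0∞) := by
        rw [hsE]
        push_cast
        rfl
      rw [hsE_cast, ENNReal.toReal_natCast]
      linarith
    have hsEne : sE ≠ ⊤ := by
      rw [hsE]
      exact ENNReal.sum_ne_top.mpr fun j _ => ENNReal.natCast_ne_top _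
    -- measurability of the two-variable tail function
    have hVt_meas : Measurable (fun q : ℝ × B => PX {x | q.1 < T (x, q.2)}) := by
      have hS : MeasurableSet {z : (ℝ × B) × A | z.1.1 < T (z.2, z.1.2)} := by
        exact measurableSet_lt (measurable_fst.fst)
          (hTmeas.comp (measurable_snd.prodMk measurable_fst.snd))
      have := measurable_measure_prodMk_left (ν := PX) hS
      convert this using 1
      rfl
    have hM0' : (M : ℝ≥0∞) ≠ 0 := Nat.cast_ne_zero.mpr (Nat.pos_iff_ne_zero.mp hM)
    have hMtop : (M : ℝ≥0∞) ≠ ⊤ := ENNReal.natCast_ne_top M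
    set W : B → ℝ≥0∞ := fun y => ∫⁻ x, ENNReal.ofReal (T (x, y)) ∂PX with hW
    have hWmeas : Measurable W :=
      Measurable.lintegral_prod_left' (ENNReal.measurable_ofReal.comp hTmeas)
    have hlayery : ∀ y : B, ∫⁻ t in Set.Ioi (0:ℝ), PX {x | t < T (x, y)} = W y := by
      intro y
      rw [hW]
      exact (lintegral_eq_lintegral_meas_lt PX (ae_of_all _ fun x => (hT01 (x, y)).1)
        ((hTmeas.comp (measurable_id.prodMk measurable_const)).aemeasurable)).symm
    -- Step B1 : the missed-detection part
    have htail_meas : Measurable fun t : ℝ => PXY {z | t < T z} := by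
      have hanti : Antitone fun t : ℝ => PXY {z | t < T z} := fun t1 t2 h12 =>
        measure_mono fun z hz => lt_of_le_of_lt h12 hz
      exact hanti.measurable
    have hIoo_tail : ∫⁻ t in Set.Ioo (0:ℝ) 1, PXY {z | t < T z}
        = ENNReal.ofReal (∫ z, T z ∂PXY) := by
      rw [← tail_restrict PXY T (fun z => (hT01 z).2)]
      rw [← lintegral_eq_lintegral_meas_lt PXY (ae_of_all _ fun z => (hT01 z).1)
        hTmeas.aemeasurable]
      rw [← ofReal_integral_eq_lintegral_ofReal (integrable01 hTmeas hT01)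
        (ae_of_all _ fun z => (hT01 z).1)]
    have hB1 : ∫⁻ t in Set.Ioo (0:ℝ) 1, PXY {z | T z ≤ t} ≤ ENNReal.ofReal (ε - τ) := by
      have hcompl : ∀ t : ℝ, PXY {z | T z ≤ t} = 1 - PXY {z | t < T z} := by
        intro t
        have hset : {z : A × B | T z ≤ t} = {z | t < T z}ᶜ := by
          ext z
          simp [not_lt]
        rw [hset, measure_compl (measurableSet_lt measurable_const hTmeas)
          (measure_ne_top _ _), measure_univ]
      calc ∫⁻ t in Set.Ioo (0:ℝ) 1, PXY {z | T z ≤ t}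
          = ∫⁻ t in Set.Ioo (0:ℝ) 1, (1 - PXY {z | t < T z}) := by
            refine lintegral_congr fun t => ?_
            rw [hcompl t]
        _ = (∫⁻ _ in Set.Ioo (0:ℝ) 1, (1:ℝ≥0∞))
            - ∫⁻ t in Set.Ioo (0:ℝ) 1, PXY {z | t < T z} := by
            refine lintegral_sub htail_meas ?_ (ae_of_all _ fun t => prob_le_one)
            refine ne_top_of_le_ne_top (by simp : (1:ℝ≥0∞) ≠ ⊤) ?_
            calc ∫⁻ t in Set.Ioo (0:ℝ) 1, PXY {z | t < T z}
                ≤ ∫⁻ _ in Set.Ioo (0:ℝ) 1, (1:ℝ≥0∞) :=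
                  lintegral_mono fun t => prob_le_one
              _ = 1 := by simp [Real.volume_Ioo]
        _ = 1 - ∫⁻ t in Set.Ioo (0:ℝ) 1, PXY {z | t < T z} := by
            congr 1
            simp [Real.volume_Ioo]
        _ ≤ 1 - ENNReal.ofReal (1 - ε + τ) := by
            refine tsub_le_tsub_left ?_ _
            rw [hIoo_tail]
            exact ENNReal.ofReal_le_ofReal hTP
        _ = ENNReal.ofReal (ε - τ) := by
            rw [← ENNReal.ofReal_one, ← ENNReal.ofReal_sub _ (by linarith : (0:ℝ) ≤ 1 - ε + τ)]
            congr 1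
            ring
    -- Step B2 : the false-alarm part
    have hjoint : Measurable (fun q : ℝ × B =>
        min (M:ℝ≥0∞) (sE * PX {x | q.1 < T (x, q.2)})) :=
      measurable_const.min (hVt_meas.const_mul sE)
    set U : B → ℝ≥0∞ := fun y => min 1 (sE / (M:ℝ≥0∞) * W y) with hU
    have hUmeas : Measurable U := measurable_const.min (hWmeas.const_mul _)
    have hUle1 : ∀ y, U y ≤ 1 := fun y => min_le_left _ _
    have hmin_eq : ∀ y, min (M:ℝ≥0∞) (sE * W y) = (M:ℝ≥0∞) * U y := by
      intro y
      have hMmul : (M:ℝ≥0∞) * (sE / (M:ℝ≥0∞) * W y) = sE * W y := by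
        rw [← mul_assoc, ENNReal.mul_div_cancel hM0' hMtop]
      show min (M:ℝ≥0∞) (sE * W y) = (M:ℝ≥0∞) * min 1 (sE / (M:ℝ≥0∞) * W y)
      rcases le_total (1:ℝ≥0∞) (sE / (M:ℝ≥0∞) * W y) with h | h
      · rw [min_eq_left h, mul_one, min_eq_left]
        calc (M:ℝ≥0∞) = (M:ℝ≥0∞) * 1 := (mul_one _).symm
          _ ≤ (M:ℝ≥0∞) * (sE / (M:ℝ≥0∞) * W y) := mul_le_mul_right h _
          _ = sE * W y := hMmul
      · rw [min_eq_right h, hMmul, min_eq_right]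
        calc sE * W y = (M:ℝ≥0∞) * (sE / (M:ℝ≥0∞) * W y) := hMmul.symm
          _ ≤ (M:ℝ≥0∞) * 1 := mul_le_mul_right h _
          _ = (M:ℝ≥0∞) := mul_one _
    have hUP : ∫⁻ y, U y ∂PY ≤ ENNReal.ofReal τ := by
      set Ur : B → ℝ := fun y => (U y).toReal with hUr
      have hUrmeas : Measurable Ur := hUmeas.ennreal_toReal
      have hUr01 : ∀ y, Ur y ∈ Set.Icc (0:ℝ) 1 := by
        intro y
        refine ⟨ENNReal.toReal_nonneg, ?_⟩
        rw [hUr]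
        calc (U y).toReal ≤ (1:ℝ≥0∞).toReal :=
            ENNReal.toReal_mono ENNReal.one_ne_top (hUle1 y)
          _ = 1 := ENNReal.toReal_one
      have hUPne : ∫⁻ y, U y ∂PY ≠ ⊤ := by
        refine ne_top_of_le_ne_top (by simp : (1:ℝ≥0∞) ≠ ⊤) ?_
        calc ∫⁻ y, U y ∂PY ≤ ∫⁻ _, (1:ℝ≥0∞) ∂PY := lintegral_mono hUle1
          _ = 1 := by simp
      have hUQne : ∫⁻ y, U y ∂QY ≠ ⊤ := by
        refine ne_top_of_le_ne_top (by simp : (1:ℝ≥0∞) ≠ ⊤) ?_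
        calc ∫⁻ y, U y ∂QY ≤ ∫⁻ _, (1:ℝ≥0∞) ∂QY := lintegral_mono hUle1
          _ = 1 := by simp
      have hintP : ∫ y, Ur y ∂PY = (∫⁻ y, U y ∂PY).toReal :=
        integral_toReal hUmeas.aemeasurable
          (ae_of_all _ fun y => lt_of_le_of_lt (hUle1 y) ENNReal.one_lt_top)
      have hintQ : ∫ y, Ur y ∂QY = (∫⁻ y, U y ∂QY).toReal :=
        integral_toReal hUmeas.aemeasurable
          (ae_of_all _ fun y => lt_of_le_of_lt (hUle1 y) ENNReal.one_lt_top)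
      have hWQ : ∫⁻ y, W y ∂QY = ENNReal.ofReal b := by
        rw [hW]
        rw [← lintegral_prod_symm (fun z : A × B => ENNReal.ofReal (T z))
          ((ENNReal.measurable_ofReal.comp hTmeas).aemeasurable)]
        rw [← ofReal_integral_eq_lintegral_ofReal (integrable01 hTmeas hT01)
          (ae_of_all _ fun z => (hT01 z).1)]
      have hQbound : ∫⁻ y, U y ∂QY ≤ sE / (M:ℝ≥0∞) * ENNReal.ofReal b := by
        calc ∫⁻ y, U y ∂QY ≤ ∫⁻ y, sE / (M:ℝ≥0∞) * W y ∂QY :=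
            lintegral_mono fun y => min_le_right _ _
          _ = sE / (M:ℝ≥0∞) * ∫⁻ y, W y ∂QY := lintegral_const_mul _ hWmeas
          _ = sE / (M:ℝ≥0∞) * ENNReal.ofReal b := by rw [hWQ]
      have hreal : τ / β1 * ∫ y, Ur y ∂QY ≤ τ := by
        have hq : ∫ y, Ur y ∂QY ≤ ((M:ℝ) - 1)/2 * b := by
          rw [hintQ]
          have hfinite : sE / (M:ℝ≥0∞) * ENNReal.ofReal b ≠ ⊤ :=
            ENNReal.mul_ne_top (ENNReal.div_lt_top hsEne hM0').ne ENNReal.ofReal_ne_top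
          have h1 : (∫⁻ y, U y ∂QY).toReal ≤ (sE / (M:ℝ≥0∞) * ENNReal.ofReal b).toReal :=
            ENNReal.toReal_mono hfinite hQbound
          have h2 : (sE / (M:ℝ≥0∞) * ENNReal.ofReal b).toReal = ((M:ℝ) - 1)/2 * b := by
            rw [ENNReal.toReal_mul, ENNReal.toReal_div, ENNReal.toReal_natCast,
              ENNReal.toReal_ofReal hb0, hsE_val]
            have hMne : (M:ℝ) ≠ 0 := by positivity
            field_simp
          rw [h2] at h1
          exact h1
        have hfin : ((M:ℝ) - 1)/2 * b < β1 := by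
          have hlt : ((M:ℝ) - 1)/2 * b < ((M:ℝ) - 1)/2 * (2 * β1 / ((M:ℝ) - 1)) :=
            mul_lt_mul_of_pos_left hbT (by positivity)
          have heq2 : ((M:ℝ) - 1)/2 * (2 * β1 / ((M:ℝ) - 1)) = β1 := by
            field_simp
          linarith [hlt, heq2.symm.le]
        calc τ / β1 * ∫ y, Ur y ∂QY ≤ τ / β1 * (((M:ℝ) - 1)/2 * b) :=
            mul_le_mul_of_nonneg_left hq (by positivity)
          _ ≤ τ / β1 * β1 := mul_le_mul_of_nonneg_left (le_of_lt hfin) (by positivity)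
          _ = τ := div_mul_cancel₀ τ (ne_of_gt hβ1pos)
      have hPYreal : (∫⁻ y, U y ∂PY).toReal ≤ τ := by
        have := hscale Ur hUrmeas hUr01
        rw [hintP] at this
        exact le_trans this (max_le le_rfl hreal)
      calc ∫⁻ y, U y ∂PY = ENNReal.ofReal ((∫⁻ y, U y ∂PY).toReal) :=
          (ENNReal.ofReal_toReal hUPne).symm
        _ ≤ ENNReal.ofReal τ := ENNReal.ofReal_le_ofReal hPYreal
    have hB2 : ∫⁻ t in Set.Ioo (0:ℝ) 1,
        (∫⁻ y, min (M:ℝ≥0∞) (sE * PX {x | t < T (x, y)}) ∂PY)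
        ≤ (M:ℝ≥0∞) * ENNReal.ofReal τ := by
      have hswap : ∫⁻ t in Set.Ioo (0:ℝ) 1,
          (∫⁻ y, min (M:ℝ≥0∞) (sE * PX {x | t < T (x, y)}) ∂PY)
          = ∫⁻ y, (∫⁻ t in Set.Ioo (0:ℝ) 1,
            min (M:ℝ≥0∞) (sE * PX {x | t < T (x, y)})) ∂PY :=
        lintegral_lintegral_swap hjoint.aemeasurable
      rw [hswap]
      have hpt : ∀ y : B, ∫⁻ t in Set.Ioo (0:ℝ) 1,
          min (M:ℝ≥0∞) (sE * PX {x | t < T (x, y)}) ≤ min (M:ℝ≥0∞) (sE * W y) := by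
        intro y
        have hsection : Measurable fun t : ℝ => PX {x | t < T (x, y)} :=
          hVt_meas.comp (measurable_id.prodMk measurable_const)
        refine le_min ?_ ?_
        · calc ∫⁻ t in Set.Ioo (0:ℝ) 1, min (M:ℝ≥0∞) (sE * PX {x | t < T (x, y)})
              ≤ ∫⁻ _ in Set.Ioo (0:ℝ) 1, (M:ℝ≥0∞) := lintegral_mono fun t => min_le_left _ _
            _ = (M:ℝ≥0∞) := by simp [Real.volume_Ioo]
        · calc ∫⁻ t in Set.Ioo (0:ℝ) 1, min (M:ℝ≥0∞) (sE * PX {x | t < T (x, y)})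
              ≤ ∫⁻ t in Set.Ioo (0:ℝ) 1, sE * PX {x | t < T (x, y)} :=
                lintegral_mono fun t => min_le_right _ _
            _ = sE * ∫⁻ t in Set.Ioo (0:ℝ) 1, PX {x | t < T (x, y)} :=
                lintegral_const_mul _ hsection
            _ ≤ sE * W y := by
                refine mul_le_mul_right ?_ _
                rw [← hlayery y]
                exact lintegral_mono_set Set.Ioo_subset_Ioi_self
      calc ∫⁻ y, (∫⁻ t in Set.Ioo (0:ℝ) 1,
            min (M:ℝ≥0∞) (sE * PX {x | t < T (x, y)})) ∂PY
          ≤ ∫⁻ y, min (M:ℝ≥0∞) (sE * W y) ∂PY := lintegral_mono hpt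
        _ = ∫⁻ y, (M:ℝ≥0∞) * U y ∂PY := by
            refine lintegral_congr fun y => ?_
            rw [hmin_eq y]
        _ = (M:ℝ≥0∞) * ∫⁻ y, U y ∂PY := lintegral_const_mul _ hUmeas
        _ ≤ (M:ℝ≥0∞) * ENNReal.ofReal τ := mul_le_mul_right hUP _
    -- choose the threshold t
    haveI : IsProbabilityMeasure ((volume : Measure ℝ).restrict (Set.Ioo (0:ℝ) 1)) := by
      constructor
      rw [Measure.restrict_apply_univ]
      simp [Real.volume_Ioo]
    set F : ℝ → ℝ≥0∞ := fun t => (M:ℝ≥0∞) * PXY {z | T z ≤ t}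
      + ∫⁻ y, min (M:ℝ≥0∞) (sE * PX {x | t < T (x, y)}) ∂PY with hF
    have hmono_meas : Measurable fun t : ℝ => PXY {z | T z ≤ t} := by
      have hmono : Monotone fun t : ℝ => PXY {z | T z ≤ t} := fun t1 t2 h =>
        measure_mono fun z hz => le_trans hz h
      exact hmono.measurable
    have hFmeas : Measurable F := by
      refine Measurable.add (hmono_meas.const_mul _) ?_
      exact Measurable.lintegral_prod_right' hjoint
    have hFint : ∫⁻ t in Set.Ioo (0:ℝ) 1, F t ≤ (M:ℝ≥0∞) * ENNReal.ofReal ε := by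
      rw [hF]
      rw [lintegral_add_left (hmono_meas.const_mul _)]
      rw [lintegral_const_mul _ hmono_meas]
      calc ((M:ℝ≥0∞) * ∫⁻ t in Set.Ioo (0:ℝ) 1, PXY {z | T z ≤ t})
            + ∫⁻ t in Set.Ioo (0:ℝ) 1,
              (∫⁻ y, min (M:ℝ≥0∞) (sE * PX {x | t < T (x, y)}) ∂PY)
          ≤ (M:ℝ≥0∞) * ENNReal.ofReal (ε - τ) + (M:ℝ≥0∞) * ENNReal.ofReal τ :=
            add_le_add (mul_le_mul_right hB1 _) hB2
        _ = (M:ℝ≥0∞) * ENNReal.ofReal ε := by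
            rw [← mul_add, ← ENNReal.ofReal_add (by linarith) (le_of_lt hτ0)]
            congr 2
            ring
    have hCne : (M:ℝ≥0∞) * ENNReal.ofReal ε ≠ ⊤ :=
      ENNReal.mul_ne_top hMtop ENNReal.ofReal_ne_top
    obtain ⟨t, ht⟩ := exists_le_of_lintegral_le
      (μ := (volume : Measure ℝ).restrict (Set.Ioo (0:ℝ) 1))
      hFmeas.aemeasurable hCne hFint
    -- apply Step A
    have hDmeas : MeasurableSet {z : A × B | t < T z} :=
      measurableSet_lt measurable_const hTmeas
    refine stepA κ PX M hM hDmeas (le_of_lt hε0) ?_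
    have hDc : {z : A × B | t < T z}ᶜ = {z | T z ≤ t} := by
      ext z
      simp [not_lt]
    rw [show PX.compProd κ = PXY from rfl, hDc]
    rw [show PX.bind κ = PY from rfl]
    rw [show (∑ j : Fin M, ((j : ℕ) : ℝ≥0∞)) = sE from rfl]
    exact le_trans (le_of_eq (by rw [hF]; rfl)) ht
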